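/- Let X be a connected graph (as a metric space with the path metric) and Y a connected graph, and let φ : X → Y be a surjective simplicial Lipschitz map. Suppose X is Gromov hyperbolic and there is M > 0 such that for all vertices x, x' of X with d_Y(φ(x), φ(x')) ≤ 1 and every geodesic α in X from x to x', the image φ(α) has diameter at most M in Y. Then Y is Gromov hyperbolic. -/

import Mathlib

/-- The Gromov product `(x,y)_w` in a graph, computed from the path metric. -/
noncomputable def gromovProduct {V : Type*} (G : SimpleGraph V) (w x y : V) : ℝ :=
  ((G.dist w x : ℝ) + (G.dist w y : ℝ) - (G.dist x y : ℝ)) / 2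

/-- Gromov hyperbolicity of a graph (with its path metric), via the four-point condition
on Gromov products. -/
def IsGromovHyperbolicGraph {V : Type*} (G : SimpleGraph V) : Prop :=
  ∃ δ : ℝ, 0 ≤ δ ∧ ∀ w x y z : V,
    min (gromovProduct G w x y) (gromovProduct G w y z) - δ ≤ gromovProduct G w x z

open SimpleGraph

namespace KR

section Graphs
variable {W : Type*} {H : SimpleGraph W}

/-- Split a walk at position `t`. -/
lemma walk_split {a b : W} (σ : H.Walk a b) (t : ℕ) :
    ∃ (σ₁ : H.Walk a (σ.getVert t)) (σ₂ : H.Walk (σ.getVert t) b),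
      σ₁.length = min t σ.length ∧
      σ₂.length = σ.length - min t σ.length ∧
      (∀ i, σ₁.getVert i = σ.getVert (min i t)) ∧
      (∀ i, σ₂.getVert i = σ.getVert (min t σ.length + i)) ∧
      (∀ x ∈ σ₁.support, x ∈ σ.support) ∧
      (∀ x ∈ σ₂.support, x ∈ σ.support) := by
  induction σ generalizing t with
  | nil =>
    exact ⟨Walk.nil, Walk.nil, by simp, by simp, fun i => rfl, fun i => rfl,
      fun x hx => hx, fun x hx => hx⟩
  | @cons u v w h p ih =>
    match t with
    | 0 =>
      refine ⟨Walk.nil, (Walk.cons h p).copy (Walk.getVert_zero _).symm rfl, by simp; rfl, by simp,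
        ?_, ?_, ?_, ?_⟩
      · intro i; simp [Walk.getVert]
      · intro i; simp [Walk.getVert_copy]
      · intro x hx; change x ∈ [u] at hx; simp at hx; subst hx
        simpa using Walk.start_mem_support _
      · intro x hx; simpa using hx
    | (s+1) =>
      obtain ⟨p₁, p₂, hl1, hl2, hg1, hg2, hs1, hs2⟩ := ih s
      refine ⟨Walk.cons h p₁, p₂, ?_, ?_, ?_, ?_, ?_, ?_⟩
      · simpa using by omega
      · exact hl2.trans (by simp only [Walk.length_cons]; omega)
      · intro i
        match i with
        | 0 => simp
        | (k+1) =>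
          have hmm : min (k+1) (s+1) = min k s + 1 := by omega
          rw [hmm]
          simp only [Walk.getVert_cons_succ]
          exact hg1 k
      · intro i
        refine (hg2 i).trans ?_
        have : min (s+1) (Walk.cons h p).length = min s p.length + 1 := by
          simp only [Walk.length_cons]; omega
        rw [this]
        have : min s p.length + 1 + i = (min s p.length + i) + 1 := by omega
        rw [this, Walk.getVert_cons_succ]
      · intro x hx
        simp only [Walk.support_cons, List.mem_cons] at hx ⊢
        rcases hx with h' | h'
        · exact Or.inl rfl
        · exact Or.inr (hs1 x ‹_›)
      · intro x hx
        simp only [Walk.support_cons, List.mem_cons]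
        exact Or.inr (hs2 x hx)

/-- A sub-walk between two positions. -/
lemma exists_middle_walk {a b : W} (σ : H.Walk a b) {i j : ℕ} (hij : i ≤ j)
    (hj : j ≤ σ.length) :
    ∃ τ : H.Walk (σ.getVert i) (σ.getVert j), τ.length = j - i ∧
      ∀ x ∈ τ.support, x ∈ σ.support := by
  obtain ⟨σ₁, σ₂, hl1, hl2, hg1, hg2, hs1, hs2⟩ := walk_split σ i
  have hmin : min i σ.length = i := by omega
  obtain ⟨τ₁, τ₂, kl1, kl2, kg1, kg2, ks1, ks2⟩ := walk_split σ₂ (j - i)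
  have he : σ₂.getVert (j - i) = σ.getVert j := by
    rw [hg2 (j-i), hmin]
    congr 1; omega
  refine ⟨τ₁.copy rfl he, ?_, ?_⟩
  · simp only [Walk.length_copy]
    rw [kl1, hl2, hmin]
    omega
  · intro x hx
    rw [Walk.support_copy] at hx
    exact hs2 x (ks1 x hx)

/-- Distances along a geodesic walk. -/
lemma dist_getVert_getVert (hc : H.Connected) {a b : W} (σ : H.Walk a b)
    (hσ : σ.length = H.dist a b) {i j : ℕ} (hij : i ≤ j) (hj : j ≤ σ.length) :
    H.dist (σ.getVert i) (σ.getVert j) = j - i := by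
  obtain ⟨τ, hτl, _⟩ := exists_middle_walk σ hij hj
  have hub : H.dist (σ.getVert i) (σ.getVert j) ≤ j - i := hτl ▸ SimpleGraph.dist_le τ
  -- lower bound
  obtain ⟨σ₁, σ₂, hl1, hl2, hg1, hg2, hs1, hs2⟩ := walk_split σ i
  have h1 : H.dist a (σ.getVert i) ≤ i := by
    have := SimpleGraph.dist_le σ₁
    omega
  obtain ⟨σ₁', σ₂', hl1', hl2', hg1', hg2', hs1', hs2'⟩ := walk_split σ j
  have h2 : H.dist (σ.getVert j) b ≤ σ.length - j := by
    have := SimpleGraph.dist_le σ₂'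
    omega
  have htri : H.dist a b ≤ H.dist a (σ.getVert i) + (H.dist (σ.getVert i) (σ.getVert j)
      + H.dist (σ.getVert j) b) := by
    calc H.dist a b ≤ H.dist a (σ.getVert i) + H.dist (σ.getVert i) b :=
          hc.dist_triangle
      _ ≤ _ := by
          have := hc.dist_triangle (u := σ.getVert i) (v := σ.getVert j) (w := b)
          omega
  omega

/-- distance from start along geodesic. -/
lemma dist_start_getVert (hc : H.Connected) {a b : W} (σ : H.Walk a b)
    (hσ : σ.length = H.dist a b) {i : ℕ} (hi : i ≤ σ.length) :
    H.dist a (σ.getVert i) = i := by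
  have := dist_getVert_getVert hc σ hσ (Nat.zero_le i) hi
  simpa using this

lemma getVert_mem_support {a b : W} (σ : H.Walk a b) (i : ℕ) :
    σ.getVert i ∈ σ.support := by
  rcases le_or_gt i σ.length with h | h
  · exact Walk.mem_support_iff_exists_getVert.2 ⟨i, rfl, h⟩
  · rw [Walk.getVert_of_length_le σ h.le]
    exact Walk.end_mem_support σ


/-- Discrete intermediate value theorem along a chain. -/
lemma ivt (hc : H.Connected) (a : W) :
    ∀ (l : List W) (hl : l ≠ []), l.Chain' (fun u v => H.dist u v ≤ 1) →
      ∀ i : ℕ, H.dist a (l.head hl) ≤ i → i ≤ H.dist a (l.getLast hl) →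
        ∃ w ∈ l, H.dist a w = i := by
  intro l
  induction l with
  | nil => intro hl; exact absurd rfl hl
  | cons w₁ tl ih =>
    intro hl hchain i hhd htl
    match tl, hchain with
    | [], _ =>
      refine ⟨w₁, by simp, ?_⟩
      simp only [List.head_cons] at hhd
      simp only [List.getLast_singleton] at htl
      omega
    | w₂ :: tl', hchain =>
      rcases eq_or_lt_of_le (by simpa using hhd) with he | hlt
      · exact ⟨w₁, by simp, he⟩
      · have h12 : H.dist w₁ w₂ ≤ 1 := (List.isChain_cons_cons.1 hchain).1
        have hch' : (w₂ :: tl').Chain' (fun u v => H.dist u v ≤ 1) :=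
          (List.isChain_cons_cons.1 hchain).2
        have hhd' : H.dist a ((w₂ :: tl').head (by simp)) ≤ i := by
          simp only [List.head_cons]
          have := hc.dist_triangle (u := a) (v := w₁) (w := w₂)
          omega
        have htl' : i ≤ H.dist a ((w₂ :: tl').getLast (by simp)) := by
          rw [← List.getLast_cons (l := w₂ :: tl') (by simp) (a := w₁)]
          exact htl
        obtain ⟨w, hw, hdw⟩ := ih (by simp) hch' i hhd' htl'
        exact ⟨w, by simp [hw], hdw⟩

lemma sq_le_two_pow : ∀ {k : ℕ}, 4 ≤ k → k * k ≤ 2 ^ k := by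
  intro k
  induction k with
  | zero => omega
  | succ n ih =>
    intro h
    rcases Nat.lt_or_ge n 4 with h4 | h4
    · have hn3 : n = 3 := by omega
      subst hn3; norm_num
    · have h1 := ih h4
      have h2 : (n+1)*(n+1) ≤ 2*(n*n) := by nlinarith
      have h3 : (2:ℕ)^(n+1) = 2 * 2^n := by rw [pow_succ]; ring
      omega

lemma log_le_sqrt_add_three (r : ℕ) : Nat.log 2 r ≤ Nat.sqrt r + 3 := by
  rcases Nat.lt_or_ge (Nat.log 2 r) 4 with h | h
  · omega
  · have hr : r ≠ 0 := by
      intro h0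
      rw [h0] at h
      simp at h
    have h1 : (Nat.log 2 r) * (Nat.log 2 r) ≤ 2 ^ (Nat.log 2 r) := sq_le_two_pow h
    have h2 : 2 ^ (Nat.log 2 r) ≤ r := Nat.pow_log_le_self 2 hr
    have h3 : Nat.log 2 r ≤ Nat.sqrt r := Nat.le_sqrt.2 (le_trans h1 h2)
    omega

lemma arith_contra (M D r : ℕ) (hM : 1 ≤ M) (hT : (M + 10*D + 1)^2 < r)
    (hle : r ≤ M + 6*D + D * Nat.log 2 r) : False := by
  set s := Nat.sqrt r with hsdef
  have hx2 : (M + 10*D + 1) * (M + 10*D + 1) ≤ r := by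
    have : (M + 10*D + 1)^2 = (M + 10*D + 1) * (M + 10*D + 1) := sq _
    omega
  have hs : M + 10*D + 1 ≤ s := Nat.le_sqrt.2 hx2
  have hs1 : 1 ≤ s := by omega
  have hlog := log_le_sqrt_add_three r
  have hrs : s * s ≤ r := Nat.sqrt_le r
  have hDl : D * Nat.log 2 r ≤ D * (s + 3) := Nat.mul_le_mul_left _ hlog
  have hDe : D * (s + 3) = D * s + 3 * D := by ring
  -- now r ≤ M + 9D + D*s
  have hr1 : r ≤ M + 9*D + D * s := by omega
  have hx : (M + 10*D + 1) * s ≤ s * s := Nat.mul_le_mul_right _ hs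
  have hexp : (M + 10*D + 1) * s = M * s + 10*(D*s) + s := by ring
  have hMs : M ≤ M * s := Nat.le_mul_of_pos_right _ (by omega)
  have hDs : D ≤ D * s := Nat.le_mul_of_pos_right _ (by omega)
  omega

lemma arith_pow (T D r : ℕ) (h4 : 4*D + 2 ≤ T) (hT : T < r) :
    2*(r + T + 2*D + 1) ≤ 2 ^ (Nat.log 2 r + 4) := by
  have h1 : r < 2 ^ (Nat.log 2 r + 1) := Nat.lt_pow_succ_log_self (by norm_num) r
  have h2 : (2:ℕ) ^ (Nat.log 2 r + 4) = 8 * 2 ^ (Nat.log 2 r + 1) := by ring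
  omega

lemma T_facts (M D : ℕ) (hM : 1 ≤ M) :
    4*D + 2 ≤ (M + 10*D + 1)^2 ∧ 2*D + M ≤ (M + 10*D + 1)^2 ∧ D + M ≤ (M+10*D+1)^2 := by
  have h : (M + 10*D + 1) ≤ (M + 10*D + 1)^2 := Nat.le_self_pow (by norm_num) _
  omega


section Abstract
variable (M D : ℕ) (c : W → W → List W)

/-- Subdivision lemma. -/
lemma L0 (hc : H.Connected) (hmem : ∀ a b : W, a ∈ c a b)
    (h1 : ∀ a b : W, H.dist a b ≤ 1 → ∀ u ∈ c a b, ∀ v ∈ c a b, H.dist u v ≤ M)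
    (h2 : ∀ a b e : W, ∀ u ∈ c a e, ∃ v, (v ∈ c a b ∨ v ∈ c b e) ∧ H.dist u v ≤ D) :
    ∀ (k : ℕ) (a b : W) (σ : H.Walk a b), σ.length ≤ 2^k →
      ∀ u ∈ c a b, ∃ v ∈ σ.support, H.dist u v ≤ M + D * k := by
  intro k
  induction k with
  | zero =>
    intro a b σ hlen u hu
    refine ⟨a, Walk.start_mem_support σ, ?_⟩
    have hab : H.dist a b ≤ 1 := le_trans (SimpleGraph.dist_le σ) (by simpa using hlen)
    simpa using h1 a b hab u hu a (hmem a b)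
  | succ k ih =>
    intro a b σ hlen u hu
    obtain ⟨σ₁, σ₂, hl1, hl2, _, _, hs1, hs2⟩ := walk_split σ (2^k)
    obtain ⟨v₁, hv₁, hdv₁⟩ := h2 a (σ.getVert (2^k)) b u hu
    have hpow : (2:ℕ)^(k+1) = 2^k + 2^k := by rw [pow_succ]; ring
    have hDk : M + D*(k+1) = M + D*k + D := by ring
    rcases hv₁ with hv₁ | hv₁
    · obtain ⟨v, hv, hdv⟩ := ih a _ σ₁ (by omega) v₁ hv₁
      refine ⟨v, hs1 v hv, ?_⟩
      have := hc.dist_triangle (u := u) (v := v₁) (w := v)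
      omega
    · obtain ⟨v, hv, hdv⟩ := ih _ b σ₂ (by omega) v₁ hv₁
      refine ⟨v, hs2 v hv, ?_⟩
      have := hc.dist_triangle (u := u) (v := v₁) (w := v)
      omega

/-- Chains are uniformly close to geodesics. -/
lemma L1 (hc : H.Connected) (hM : 1 ≤ M) (hmem : ∀ a b : W, a ∈ c a b)
    (h1 : ∀ a b : W, H.dist a b ≤ 1 → ∀ u ∈ c a b, ∀ v ∈ c a b, H.dist u v ≤ M)
    (h2 : ∀ a b e : W, ∀ u ∈ c a e, ∃ v, (v ∈ c a b ∨ v ∈ c b e) ∧ H.dist u v ≤ D) :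
    ∀ (n : ℕ) (a b : W) (σ : H.Walk a b), σ.length = H.dist a b →
      σ.length = n → ∀ u ∈ c a b, ∃ i ≤ n, H.dist u (σ.getVert i) ≤ (M + 10*D + 1)^2 := by
  intro n
  induction n using Nat.strong_induction_on with
  | _ n IH =>
  intro a b σ hσ hn u hu
  set T := (M + 10*D + 1)^2 with hTdef
  obtain ⟨hTf1, hTf2, hTf3⟩ := T_facts M D hM
  by_contra hcon
  push_neg at hcon
  obtain ⟨i₀, hi₀mem, hi₀min⟩ := Finset.exists_min_image (Finset.range (n+1))
      (fun i => H.dist u (σ.getVert i)) ⟨0, by simp⟩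
  set r := H.dist u (σ.getVert i₀) with hrdef
  have hi₀ : i₀ ≤ n := by
    have := Finset.mem_range.1 hi₀mem
    omega
  have hrmin : ∀ i, i ≤ n → r ≤ H.dist u (σ.getVert i) := fun i hi =>
    hi₀min i (Finset.mem_range.2 (by omega))
  have hTr : T < r := hcon i₀ hi₀
  set S := r + T + 2*D + 1 with hSdef
  set ja := i₀ - S with hjadef
  set jb := min (i₀ + S) n with hjbdef
  have hjan : ja ≤ n := by omega
  have hjbn : jb ≤ n := by omega
  obtain ⟨w₁, hw₁, hdw₁⟩ := h2 a (σ.getVert ja) b u hu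
  rcases hw₁ with hw₁ | hw₁
  · -- w₁ ∈ c a a'
    rcases Nat.eq_zero_or_pos ja with h0 | hpos
    · -- a' = a
      have ha' : σ.getVert ja = a := by rw [h0, Walk.getVert_zero]
      rw [ha'] at hw₁
      have hwa : H.dist w₁ a ≤ M := h1 a a (by rw [SimpleGraph.dist_self]; omega) w₁ hw₁ a (hmem a a)
      have h00 : r ≤ H.dist u (σ.getVert 0) := hrmin 0 (by omega)
      rw [Walk.getVert_zero] at h00
      have : H.dist u a ≤ H.dist u w₁ + H.dist w₁ a := hc.dist_triangle
      omega
    · have hja_lt : ja < n := by omega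
      obtain ⟨σ₁, σ₂, hl1, hl2, hg1, hg2, hs1, hs2⟩ := walk_split σ ja
      have hσ₁len : σ₁.length = ja := by omega
      have hdaa' : H.dist a (σ.getVert ja) = ja := dist_start_getVert hc σ hσ (by omega)
      obtain ⟨i, hi, hdi⟩ := IH ja hja_lt a (σ.getVert ja) σ₁ (by omega) hσ₁len w₁ hw₁
      have hgi : σ₁.getVert i = σ.getVert i := by
        rw [hg1 i]
        congr 1
        omega
      rw [hgi] at hdi
      have hd1 : H.dist (σ.getVert i) (σ.getVert i₀) = i₀ - i :=
        dist_getVert_getVert hc σ hσ (by omega) (by omega)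
      have htri : H.dist (σ.getVert i) (σ.getVert i₀) ≤
          H.dist (σ.getVert i) u + H.dist u (σ.getVert i₀) := hc.dist_triangle
      have htri2 : H.dist (σ.getVert i) u ≤ H.dist u w₁ + H.dist w₁ (σ.getVert i) := by
        rw [SimpleGraph.dist_comm]
        exact hc.dist_triangle
      omega
  · -- w₁ ∈ c a' b
    obtain ⟨w₂, hw₂, hdw₂⟩ := h2 (σ.getVert ja) (σ.getVert jb) b w₁ hw₁
    have hduw₂ : H.dist u w₂ ≤ 2*D := by
      have t1 : H.dist u w₂ ≤ H.dist u w₁ + H.dist w₁ w₂ := hc.dist_triangle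
      omega
    rcases hw₂ with hw₂ | hw₂
    · -- middle segment
      obtain ⟨τ, hτlen, hτsup⟩ := exists_middle_walk σ (show ja ≤ jb by omega) (by omega)
      set k := Nat.log 2 r + 4 with hkdef
      have hτk : τ.length ≤ 2^k := by
        have harith : 2*(r + T + 2*D + 1) ≤ 2^k := by
          rw [hkdef]
          exact arith_pow T D r hTf1 hTr
        omega
      obtain ⟨v, hv, hdv⟩ := L0 M D c hc hmem h1 h2 k _ _ τ hτk w₂ hw₂
      obtain ⟨iv, hiv, hivle⟩ := Walk.mem_support_iff_exists_getVert.1 (hτsup v hv)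
      have hrv : r ≤ H.dist u (σ.getVert iv) := hrmin iv (by omega)
      rw [hiv] at hrv
      have htr : H.dist u v ≤ H.dist u w₂ + H.dist w₂ v := hc.dist_triangle
      have hkexp : D * k = D * Nat.log 2 r + 4*D := by rw [hkdef]; ring
      exact arith_contra M D r hM hTr (by omega)
    · -- w₂ ∈ c b' b
      rcases eq_or_lt_of_le hjbn with hjbeq | hjblt
      · -- b' = b
        have hb' : σ.getVert jb = b := by
          rw [hjbeq, ← hn, Walk.getVert_length]
        rw [hb'] at hw₂
        have hwb : H.dist w₂ b ≤ M := h1 b b (by rw [SimpleGraph.dist_self]; omega) w₂ hw₂ b (hmem b b)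
        have h00 : r ≤ H.dist u (σ.getVert n) := hrmin n (by omega)
        have hgb : σ.getVert n = b := by rw [← hn, Walk.getVert_length]
        rw [hgb] at h00
        have : H.dist u b ≤ H.dist u w₂ + H.dist w₂ b := hc.dist_triangle
        omega
      · -- jb = i₀ + S < n
        have hjbS : jb = i₀ + S := by omega
        obtain ⟨σ₁, σ₂, hl1, hl2, hg1, hg2, hs1, hs2⟩ := walk_split σ jb
        have hσ₂len : σ₂.length = n - jb := by omega
        have hdbb : H.dist (σ.getVert jb) b = n - jb := by
          have := dist_getVert_getVert hc σ hσ (show jb ≤ n by omega) (by omega)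
          have hgb : σ.getVert n = b := by rw [← hn, Walk.getVert_length]
          rw [← hn] at this ⊢
          rw [Walk.getVert_length] at this
          omega
        obtain ⟨i', hi', hdi'⟩ := IH (n - jb) (by omega) (σ.getVert jb) b σ₂
          (by omega) hσ₂len w₂ hw₂
        have hgi : σ₂.getVert i' = σ.getVert (jb + i') := by
          rw [hg2 i']
          congr 1
          omega
        rw [hgi] at hdi'
        have hd1 : H.dist (σ.getVert i₀) (σ.getVert (jb + i')) = jb + i' - i₀ :=
          dist_getVert_getVert hc σ hσ (by omega) (by omega)
        have htri : H.dist (σ.getVert i₀) (σ.getVert (jb + i')) ≤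
            H.dist (σ.getVert i₀) u + H.dist u (σ.getVert (jb + i')) := hc.dist_triangle
        have htri2 : H.dist u (σ.getVert (jb + i')) ≤
            H.dist u w₂ + H.dist w₂ (σ.getVert (jb + i')) := hc.dist_triangle
        have hcomm : H.dist (σ.getVert i₀) u = H.dist u (σ.getVert i₀) :=
          SimpleGraph.dist_comm
        omega


/-- Geodesics are uniformly close to chains. -/
lemma L2 (hc : H.Connected) (hM : 1 ≤ M)
    (hne : ∀ a b : W, c a b ≠ [])
    (hhead : ∀ a b : W, (c a b).head (hne a b) = a)
    (hlast : ∀ a b : W, (c a b).getLast (hne a b) = b)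
    (hchain : ∀ a b : W, (c a b).Chain' (fun u v => H.dist u v ≤ 1))
    (h1 : ∀ a b : W, H.dist a b ≤ 1 → ∀ u ∈ c a b, ∀ v ∈ c a b, H.dist u v ≤ M)
    (h2 : ∀ a b e : W, ∀ u ∈ c a e, ∃ v, (v ∈ c a b ∨ v ∈ c b e) ∧ H.dist u v ≤ D) :
    ∀ (a b : W) (σ : H.Walk a b), σ.length = H.dist a b →
      ∀ i ≤ σ.length, ∃ w ∈ c a b, H.dist (σ.getVert i) w ≤ 2*(M + 10*D + 1)^2 := by
  intro a b σ hσ i hi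
  have hmem : ∀ a b : W, a ∈ c a b := fun a b => by
    have hmm := List.head_mem (hne a b)
    rwa [hhead a b] at hmm
  obtain ⟨w, hw, hdw⟩ := ivt hc a (c a b) (hne a b) (hchain a b) i
    (by rw [hhead, SimpleGraph.dist_self]; omega) (by rw [hlast]; omega)
  obtain ⟨j, hj, hdj⟩ := L1 M D c hc hM hmem h1 h2 σ.length a b σ hσ rfl w hw
  have hdaj : H.dist a (σ.getVert j) = j := dist_start_getVert hc σ hσ hj
  have ht1 : H.dist a w ≤ H.dist a (σ.getVert j) + H.dist (σ.getVert j) w := hc.dist_triangle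
  have ht2 : H.dist a (σ.getVert j) ≤ H.dist a w + H.dist w (σ.getVert j) := hc.dist_triangle
  have hcm : H.dist (σ.getVert j) w = H.dist w (σ.getVert j) := SimpleGraph.dist_comm
  refine ⟨w, hw, ?_⟩
  have ht3 : H.dist (σ.getVert i) w ≤
      H.dist (σ.getVert i) (σ.getVert j) + H.dist (σ.getVert j) w := hc.dist_triangle
  rcases le_or_gt i j with hij | hij
  · have := dist_getVert_getVert hc σ hσ hij hj
    omega
  · have := dist_getVert_getVert hc σ hσ hij.le hi
    have hcm2 : H.dist (σ.getVert i) (σ.getVert j) = H.dist (σ.getVert j) (σ.getVert i) :=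
      SimpleGraph.dist_comm
    omega

/-- Thin triangles for geodesics. -/
lemma L3 (hc : H.Connected) (hM : 1 ≤ M)
    (hne : ∀ a b : W, c a b ≠ [])
    (hhead : ∀ a b : W, (c a b).head (hne a b) = a)
    (hlast : ∀ a b : W, (c a b).getLast (hne a b) = b)
    (hchain : ∀ a b : W, (c a b).Chain' (fun u v => H.dist u v ≤ 1))
    (h1 : ∀ a b : W, H.dist a b ≤ 1 → ∀ u ∈ c a b, ∀ v ∈ c a b, H.dist u v ≤ M)
    (h2 : ∀ a b e : W, ∀ u ∈ c a e, ∃ v, (v ∈ c a b ∨ v ∈ c b e) ∧ H.dist u v ≤ D) :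
    ∀ (a b e : W) (σab : H.Walk a b) (σbe : H.Walk b e) (σae : H.Walk a e),
      σab.length = H.dist a b → σbe.length = H.dist b e → σae.length = H.dist a e →
      ∀ i ≤ σae.length,
        ∃ v, ((∃ j ≤ σab.length, σab.getVert j = v) ∨ (∃ j ≤ σbe.length, σbe.getVert j = v)) ∧
          H.dist (σae.getVert i) v ≤ 3*(M + 10*D + 1)^2 + D := by
  intro a b e σab σbe σae hab hbe hae i hi
  have hmem : ∀ a b : W, a ∈ c a b := fun a b => by
    have hmm := List.head_mem (hne a b)
    rwa [hhead a b] at hmm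
  obtain ⟨w, hw, hdw⟩ := L2 M D c hc hM hne hhead hlast hchain h1 h2 a e σae hae i hi
  obtain ⟨v₁, hv₁, hdv₁⟩ := h2 a b e w hw
  rcases hv₁ with hv₁ | hv₁
  · obtain ⟨j, hj, hdj⟩ := L1 M D c hc hM hmem h1 h2 σab.length a b σab hab rfl v₁ hv₁
    refine ⟨σab.getVert j, Or.inl ⟨j, hj, rfl⟩, ?_⟩
    have t1 : H.dist (σae.getVert i) v₁ ≤ H.dist (σae.getVert i) w + H.dist w v₁ :=
      hc.dist_triangle
    have t2 : H.dist (σae.getVert i) (σab.getVert j) ≤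
        H.dist (σae.getVert i) v₁ + H.dist v₁ (σab.getVert j) := hc.dist_triangle
    omega
  · obtain ⟨j, hj, hdj⟩ := L1 M D c hc hM hmem h1 h2 σbe.length b e σbe hbe rfl v₁ hv₁
    refine ⟨σbe.getVert j, Or.inr ⟨j, hj, rfl⟩, ?_⟩
    have t1 : H.dist (σae.getVert i) v₁ ≤ H.dist (σae.getVert i) w + H.dist w v₁ :=
      hc.dist_triangle
    have t2 : H.dist (σae.getVert i) (σbe.getVert j) ≤
        H.dist (σae.getVert i) v₁ + H.dist v₁ (σbe.getVert j) := hc.dist_triangle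
    omega


lemma abstract_main (hc : H.Connected) (hM : 1 ≤ M)
    (hne : ∀ a b : W, c a b ≠ [])
    (hhead : ∀ a b : W, (c a b).head (hne a b) = a)
    (hlast : ∀ a b : W, (c a b).getLast (hne a b) = b)
    (hchain : ∀ a b : W, (c a b).Chain' (fun u v => H.dist u v ≤ 1))
    (h1 : ∀ a b : W, H.dist a b ≤ 1 → ∀ u ∈ c a b, ∀ v ∈ c a b, H.dist u v ≤ M)
    (h2 : ∀ a b e : W, ∀ u ∈ c a e, ∃ v, (v ∈ c a b ∨ v ∈ c b e) ∧ H.dist u v ≤ D) :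
    IsGromovHyperbolicGraph H := by
  classical
  set E := 3*(M + 10*D + 1)^2 + D with hE
  refine ⟨3*(E:ℝ) + 1, by positivity, ?_⟩
  intro w x y z
  obtain ⟨σxz, hσxz⟩ := hc.exists_walk_length_eq_dist x z
  obtain ⟨σxw, hσxw⟩ := hc.exists_walk_length_eq_dist x w
  obtain ⟨σwz, hσwz⟩ := hc.exists_walk_length_eq_dist w z
  obtain ⟨σxy, hσxy⟩ := hc.exists_walk_length_eq_dist x y
  obtain ⟨σyz, hσyz⟩ := hc.exists_walk_length_eq_dist y z
  have cm1 : H.dist z w = H.dist w z := SimpleGraph.dist_comm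
  have cm2 : H.dist x w = H.dist w x := SimpleGraph.dist_comm
  have cm3 : H.dist x y = H.dist w x + H.dist w y - (H.dist x y) → True := fun _ => trivial
  have tr1 : H.dist x w ≤ H.dist x z + H.dist z w := hc.dist_triangle
  have tr2 : H.dist w z ≤ H.dist w x + H.dist x z := hc.dist_triangle
  set m := (H.dist x z + H.dist x w - H.dist w z) / 2 with hm
  have hmlen : m ≤ σxz.length := by omega
  set u := σxz.getVert m with hu
  have hxu : H.dist x u = m := dist_start_getVert hc σxz hσxz hmlen
  have huz : H.dist u z = H.dist x z - m := by
    have h := dist_getVert_getVert hc σxz hσxz hmlen (le_refl σxz.length)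
    rw [Walk.getVert_length] at h
    rw [← hu] at h
    omega
  -- Step A : d(w,u) ≤ (w|x,z)-ish + 2E + 1/2
  have hA : (H.dist w u : ℝ) ≤
      ((H.dist w x : ℝ) + (H.dist w z : ℝ) - (H.dist x z : ℝ))/2 + 2*E + 1/2 := by
    obtain ⟨v, hvcase, hdv⟩ := L3 M D c hc hM hne hhead hlast hchain h1 h2
      x w z σxw σwz σxz hσxw hσwz hσxz m hmlen
    rw [← hu] at hdv
    rcases hvcase with ⟨j, hj, hvj⟩ | ⟨j, hj, hvj⟩
    · subst hvj
      have f1 : H.dist x (σxw.getVert j) = j := dist_start_getVert hc σxw hσxw hj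
      have f2 : H.dist (σxw.getVert j) w = σxw.length - j := by
        have h := dist_getVert_getVert hc σxw hσxw hj (le_refl σxw.length)
        rw [Walk.getVert_length] at h
        omega
      have t1 : H.dist x u ≤ H.dist x (σxw.getVert j) + H.dist (σxw.getVert j) u :=
        hc.dist_triangle
      have t2 : H.dist w u ≤ H.dist w (σxw.getVert j) + H.dist (σxw.getVert j) u :=
        hc.dist_triangle
      have c1 : H.dist (σxw.getVert j) u = H.dist u (σxw.getVert j) := SimpleGraph.dist_comm
      have c2 : H.dist w (σxw.getVert j) = H.dist (σxw.getVert j) w := SimpleGraph.dist_comm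
      have n1 : H.dist w u + m ≤ H.dist x w + 2*E := by omega
      have n2 : H.dist x z + H.dist x w ≤ 2*m + 1 + H.dist w z := by omega
      have n1' : (H.dist w u : ℝ) + m ≤ H.dist x w + 2*(E:ℝ) := by exact_mod_cast n1
      have n2' : (H.dist x z : ℝ) + H.dist x w ≤ 2*(m:ℝ) + 1 + H.dist w z := by
        exact_mod_cast n2
      have c2' : (H.dist x w : ℝ) = H.dist w x := by exact_mod_cast cm2
      linarith
    · subst hvj
      have f1 : H.dist w (σwz.getVert j) = j := dist_start_getVert hc σwz hσwz hj
      have f2 : H.dist (σwz.getVert j) z = σwz.length - j := by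
        have h := dist_getVert_getVert hc σwz hσwz hj (le_refl σwz.length)
        rw [Walk.getVert_length] at h
        omega
      have t1 : H.dist u z ≤ H.dist u (σwz.getVert j) + H.dist (σwz.getVert j) z :=
        hc.dist_triangle
      have t2 : H.dist w u ≤ H.dist w (σwz.getVert j) + H.dist (σwz.getVert j) u :=
        hc.dist_triangle
      have c1 : H.dist (σwz.getVert j) u = H.dist u (σwz.getVert j) := SimpleGraph.dist_comm
      have n1 : H.dist w u + H.dist x z ≤ m + 2*E + H.dist w z := by omega
      have n2 : 2*m + H.dist w z ≤ H.dist x z + H.dist x w := by omega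
      have n1' : (H.dist w u : ℝ) + H.dist x z ≤ m + 2*(E:ℝ) + H.dist w z := by
        exact_mod_cast n1
      have n2' : 2*(m:ℝ) + H.dist w z ≤ H.dist x z + H.dist x w := by exact_mod_cast n2
      have c2' : (H.dist x w : ℝ) = H.dist w x := by exact_mod_cast cm2
      linarith
  -- Step B
  obtain ⟨v, hvcase, hdv⟩ := L3 M D c hc hM hne hhead hlast hchain h1 h2
    x y z σxy σyz σxz hσxy hσyz hσxz m hmlen
  rw [← hu] at hdv
  have hgoal : min (gromovProduct H w x y) (gromovProduct H w y z) ≤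
      gromovProduct H w x z + (3*(E:ℝ) + 1) := by
    rcases hvcase with ⟨j, hj, hvj⟩ | ⟨j, hj, hvj⟩
    · subst hvj
      have f1 : H.dist x (σxy.getVert j) = j := dist_start_getVert hc σxy hσxy hj
      have f2 : H.dist (σxy.getVert j) y = σxy.length - j := by
        have h := dist_getVert_getVert hc σxy hσxy hj (le_refl σxy.length)
        rw [Walk.getVert_length] at h
        omega
      have t1 : H.dist w x ≤ H.dist w (σxy.getVert j) + H.dist (σxy.getVert j) x :=
        hc.dist_triangle
      have t2 : H.dist w y ≤ H.dist w (σxy.getVert j) + H.dist (σxy.getVert j) y :=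
        hc.dist_triangle
      have t3 : H.dist w (σxy.getVert j) ≤ H.dist w u + H.dist u (σxy.getVert j) :=
        hc.dist_triangle
      have c1 : H.dist (σxy.getVert j) x = H.dist x (σxy.getVert j) := SimpleGraph.dist_comm
      have n1 : H.dist w x + H.dist w y ≤ 2*(H.dist w (σxy.getVert j)) + H.dist x y := by
        omega
      have n2 : H.dist w (σxy.getVert j) ≤ H.dist w u + E := by omega
      have n1' : (H.dist w x : ℝ) + H.dist w y ≤
          2*(H.dist w (σxy.getVert j) : ℝ) + H.dist x y := by exact_mod_cast n1
      have n2' : (H.dist w (σxy.getVert j) : ℝ) ≤ (H.dist w u : ℝ) + E := by exact_mod_cast n2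
      have hmin := min_le_left (gromovProduct H w x y) (gromovProduct H w y z)
      simp only [gromovProduct] at hmin ⊢
      linarith
    · subst hvj
      have f1 : H.dist y (σyz.getVert j) = j := dist_start_getVert hc σyz hσyz hj
      have f2 : H.dist (σyz.getVert j) z = σyz.length - j := by
        have h := dist_getVert_getVert hc σyz hσyz hj (le_refl σyz.length)
        rw [Walk.getVert_length] at h
        omega
      have t1 : H.dist w y ≤ H.dist w (σyz.getVert j) + H.dist (σyz.getVert j) y :=
        hc.dist_triangle
      have t2 : H.dist w z ≤ H.dist w (σyz.getVert j) + H.dist (σyz.getVert j) z :=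
        hc.dist_triangle
      have t3 : H.dist w (σyz.getVert j) ≤ H.dist w u + H.dist u (σyz.getVert j) :=
        hc.dist_triangle
      have c1 : H.dist (σyz.getVert j) y = H.dist y (σyz.getVert j) := SimpleGraph.dist_comm
      have n1 : H.dist w y + H.dist w z ≤ 2*(H.dist w (σyz.getVert j)) + H.dist y z := by
        omega
      have n2 : H.dist w (σyz.getVert j) ≤ H.dist w u + E := by omega
      have n1' : (H.dist w y : ℝ) + H.dist w z ≤
          2*(H.dist w (σyz.getVert j) : ℝ) + H.dist y z := by exact_mod_cast n1
      have n2' : (H.dist w (σyz.getVert j) : ℝ) ≤ (H.dist w u : ℝ) + E := by exact_mod_cast n2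
      have hmin := min_le_right (gromovProduct H w x y) (gromovProduct H w y z)
      simp only [gromovProduct] at hmin ⊢
      linarith
  linarith [hgoal]

end Abstract
end Graphs

/-- In a 4-point hyperbolic graph, a point with small Gromov product w.r.t. a pair is
close to any geodesic joining the pair. -/
lemma approach {V : Type*} {G : SimpleGraph V} (hG : G.Connected) {δG : ℝ} (hδ : 0 ≤ δG)
    (h4 : ∀ w x y z : V,
      min (gromovProduct G w x y) (gromovProduct G w y z) - δG ≤ gromovProduct G w x z)
    {u c₁ c₂ : V} (q : G.Walk c₁ c₂) (hq : q.length = G.dist c₁ c₂)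
    (hprod : gromovProduct G u c₁ c₂ ≤ δG) :
    ∃ j ≤ q.length, (G.dist u (q.getVert j) : ℝ) ≤ 4*δG := by
  rcases le_or_gt (G.dist u c₁) q.length with hcase | hcase
  · refine ⟨G.dist u c₁, hcase, ?_⟩
    set j := G.dist u c₁ with hj
    set v := q.getVert j with hv
    have f1 : G.dist c₁ v = j := dist_start_getVert hG q hq hcase
    have f2 : G.dist v c₂ = q.length - j := by
      have h := dist_getVert_getVert hG q hq hcase (le_refl q.length)
      rw [Walk.getVert_length] at h
      rw [hv]
      omega
    have tr : G.dist c₁ c₂ ≤ G.dist c₁ u + G.dist u c₂ := hG.dist_triangle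
    have cm : G.dist c₁ u = G.dist u c₁ := SimpleGraph.dist_comm
    have h4' := h4 u c₁ v c₂
    have hd : (G.dist u v : ℝ)/2 ≤ min (gromovProduct G u c₁ v) (gromovProduct G u v c₂) := by
      apply le_min
      · simp only [gromovProduct]
        have f0 : (G.dist u c₁ : ℝ) = (j : ℝ) := by rw [hj]
        have f1' : (G.dist c₁ v : ℝ) = (j : ℝ) := by exact_mod_cast f1
        linarith
      · simp only [gromovProduct]
        have n : G.dist v c₂ ≤ G.dist u c₂ := by omega
        have n' : (G.dist v c₂ : ℝ) ≤ (G.dist u c₂ : ℝ) := by exact_mod_cast n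
        linarith
    have hfin : (G.dist u v : ℝ)/2 - δG ≤ gromovProduct G u c₁ c₂ := by
      calc (G.dist u v : ℝ)/2 - δG
          ≤ min (gromovProduct G u c₁ v) (gromovProduct G u v c₂) - δG := by linarith
        _ ≤ gromovProduct G u c₁ c₂ := h4'
    linarith
  · refine ⟨q.length, le_refl _, ?_⟩
    rw [Walk.getVert_length]
    simp only [gromovProduct] at hprod
    have hlt : (G.dist c₁ c₂ : ℝ) < (G.dist u c₁ : ℝ) := by
      exact_mod_cast hq ▸ hcase
    linarith

/-- Thin triangles in a 4-point hyperbolic graph. -/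
lemma thinG {V : Type*} {G : SimpleGraph V} (hG : G.Connected) {δG : ℝ} (hδ : 0 ≤ δG)
    (h4 : ∀ w x y z : V,
      min (gromovProduct G w x y) (gromovProduct G w y z) - δG ≤ gromovProduct G w x z)
    {x y z : V} (p : G.Walk x z) (q₁ : G.Walk x y) (q₂ : G.Walk y z)
    (hp : p.length = G.dist x z) (hq₁ : q₁.length = G.dist x y) (hq₂ : q₂.length = G.dist y z)
    {i : ℕ} (hi : i ≤ p.length) :
    ∃ v, (v ∈ q₁.support ∨ v ∈ q₂.support) ∧ (G.dist (p.getVert i) v : ℝ) ≤ 4*δG := by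
  set u := p.getVert i with hu
  have f1 : G.dist x u = i := dist_start_getVert hG p hp hi
  have f2 : G.dist u z = p.length - i := by
    have h := dist_getVert_getVert hG p hp hi (le_refl p.length)
    rw [Walk.getVert_length] at h
    rw [hu]
    omega
  have hP0 : gromovProduct G u x z = 0 := by
    simp only [gromovProduct]
    have c1 : G.dist u x = G.dist x u := SimpleGraph.dist_comm
    have n : G.dist u x + G.dist u z = G.dist x z := by omega
    have n' : (G.dist u x : ℝ) + (G.dist u z : ℝ) = (G.dist x z : ℝ) := by exact_mod_cast n
    linarith
  have h4' := h4 u x y z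
  rw [hP0] at h4'
  rcases le_total (gromovProduct G u x y) (gromovProduct G u y z) with hmin | hmin
  · have hsmall : gromovProduct G u x y ≤ δG := by
      rw [min_eq_left hmin] at h4'
      linarith
    obtain ⟨j, _, hdist⟩ := approach hG hδ h4 q₁ hq₁ hsmall
    exact ⟨q₁.getVert j, Or.inl (getVert_mem_support q₁ j), hdist⟩
  · have hsmall : gromovProduct G u y z ≤ δG := by
      rw [min_eq_right hmin] at h4'
      linarith
    obtain ⟨j, _, hdist⟩ := approach hG hδ h4 q₂ hq₂ hsmall
    exact ⟨q₂.getVert j, Or.inr (getVert_mem_support q₂ j), hdist⟩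

end KR

/-- Kapovich--Rafi: let `φ` be a surjective simplicial Lipschitz map between
connected graphs `G` (hyperbolic) and `H` such that images under `φ` of geodesics between
vertices at `H`-distance at most `1` apart have uniformly bounded diameter `M`. Then `H`
is Gromov hyperbolic. -/
theorem stmt8 {V W : Type*} (G : SimpleGraph V) (H : SimpleGraph W)
    (hG : G.Connected) (hH : H.Connected)
    (φ : V → W) (hsurj : Function.Surjective φ)
    (hsimp : ∀ u v, G.Adj u v → H.Adj (φ u) (φ v) ∨ φ u = φ v)
    (L : ℕ) (hLip : ∀ u v, H.dist (φ u) (φ v) ≤ L * G.dist u v)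
    (hhyp : IsGromovHyperbolicGraph G)
    (M : ℕ) (hMpos : 0 < M)
    (hM : ∀ x x' : V, H.dist (φ x) (φ x') ≤ 1 →
      ∀ p : G.Walk x x', p.length = G.dist x x' →
        ∀ a ∈ p.support, ∀ b ∈ p.support, H.dist (φ a) (φ b) ≤ M) :
    IsGromovHyperbolicGraph H := by
  classical
  obtain ⟨δG, hδG, h4⟩ := hhyp
  set s : W → V := Function.surjInv hsurj with hs
  have hφs : ∀ a : W, φ (s a) = a := fun a => Function.surjInv_eq hsurj a
  have hgeo : ∀ a b : W, ∃ p : G.Walk (s a) (s b), p.length = G.dist (s a) (s b) :=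
    fun a b => hG.exists_walk_length_eq_dist _ _
  choose g hg using hgeo
  set D := L * Nat.ceil (4*δG) with hD
  set c : W → W → List W := fun a b => (g a b).support.map φ with hcdef
  have hne : ∀ a b, c a b ≠ [] := by
    intro a b
    simp only [hcdef]
    intro hcon
    exact Walk.support_ne_nil (g a b) (List.map_eq_nil_iff.1 hcon)
  have hhead : ∀ a b, (c a b).head (hne a b) = a := by
    intro a b
    simp only [hcdef]
    rw [List.head_map]
    rw [Walk.head_support]
    exact hφs a
  have hlast : ∀ a b, (c a b).getLast (hne a b) = b := by
    intro a b
    simp only [hcdef]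
    rw [List.getLast_map]
    rw [Walk.getLast_support]
    exact hφs b
  have hchain : ∀ a b, (c a b).Chain' (fun u v => H.dist u v ≤ 1) := by
    intro a b
    refine List.isChain_map_of_isChain φ ?_ (Walk.isChain_adj_support (g a b))
    intro u v huv
    rcases hsimp u v huv with h | h
    · exact le_of_eq (SimpleGraph.dist_eq_one_iff_adj.2 h)
    · rw [h, SimpleGraph.dist_self]
      omega
  have h1 : ∀ a b : W, H.dist a b ≤ 1 → ∀ u ∈ c a b, ∀ v ∈ c a b, H.dist u v ≤ M := by
    intro a b hab u hu v hv
    simp only [hcdef, List.mem_map] at hu hv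
    obtain ⟨pu, hpu, rfl⟩ := hu
    obtain ⟨pv, hpv, rfl⟩ := hv
    exact hM (s a) (s b) (by rw [hφs, hφs]; exact hab) (g a b) (hg a b) pu hpu pv hpv
  have h2 : ∀ a b e : W, ∀ u ∈ c a e, ∃ v, (v ∈ c a b ∨ v ∈ c b e) ∧ H.dist u v ≤ D := by
    intro a b e u hu
    simp only [hcdef, List.mem_map] at hu
    obtain ⟨p, hp, rfl⟩ := hu
    obtain ⟨i, hieq, hile⟩ := Walk.mem_support_iff_exists_getVert.1 hp
    obtain ⟨vh, hvcase, hvdist⟩ := KR.thinG hG hδG h4 (g a e) (g a b) (g b e)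
      (hg a e) (hg a b) (hg b e) hile
    rw [hieq] at hvdist
    have hnat : G.dist p vh ≤ Nat.ceil (4*δG) := by
      have hcast : (G.dist p vh : ℝ) ≤ ((Nat.ceil (4*δG) : ℕ) : ℝ) :=
        le_trans hvdist (Nat.le_ceil _)
      exact_mod_cast hcast
    refine ⟨φ vh, ?_, ?_⟩
    · rcases hvcase with h | h
      · exact Or.inl (by simp only [hcdef]; exact List.mem_map_of_mem h)
      · exact Or.inr (by simp only [hcdef]; exact List.mem_map_of_mem h)
    · calc H.dist (φ p) (φ vh) ≤ L * G.dist p vh := hLip p vh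
        _ ≤ L * Nat.ceil (4*δG) := Nat.mul_le_mul_left L hnat
  exact KR.abstract_main M D c hH hMpos hne hhead hlast hchain h1 h2
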